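/- For any finite sequence of positive reals λ₁,…,λ_n, the n×n matrix with entries min(λ_i, λ_j)/max(λ_i, λ_j) is positive semidefinite. -/

import Mathlib

open MeasureTheory

lemma gram_aux (n : ℕ) (lam : Fin n → ℝ) (hlam : ∀ i, 0 < lam i) (x : Fin n → ℝ) :
    0 ≤ ∑ i, ∑ j, x i * (min (lam i) (lam j) * min (lam i)⁻¹ (lam j)⁻¹) * x j := by
  set S : Fin n → Set (ℝ × ℝ) := fun i => (Set.Ioo 0 (lam i)) ×ˢ (Set.Ioo 0 (lam i)⁻¹) with hS
  have hmeas : ∀ i, MeasurableSet (S i) := fun i =>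
    (measurableSet_Ioo).prod measurableSet_Ioo
  have hprod : ∀ i j, S i ∩ S j
      = (Set.Ioo 0 (min (lam i) (lam j))) ×ˢ (Set.Ioo 0 (min (lam i)⁻¹ (lam j)⁻¹)) := by
    intro i j
    rw [hS, Set.prod_inter_prod, Set.Ioo_inter_Ioo, Set.Ioo_inter_Ioo]
    simp
  have hvol : ∀ i j, (volume (S i ∩ S j)).toReal
      = min (lam i) (lam j) * min (lam i)⁻¹ (lam j)⁻¹ := by
    intro i j
    have h1 := hlam i; have h2 := hlam j
    rw [hprod, Measure.volume_eq_prod, Measure.prod_prod, Real.volume_Ioo, Real.volume_Ioo]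
    simp only [sub_zero]
    rw [← ENNReal.ofReal_mul (le_min h1.le h2.le)]
    rw [ENNReal.toReal_ofReal]
    positivity
  have hfin : ∀ i j, volume (S i ∩ S j) ≠ ⊤ := by
    intro i j
    rw [hprod, Measure.volume_eq_prod, Measure.prod_prod, Real.volume_Ioo, Real.volume_Ioo]
    exact ENNReal.mul_ne_top ENNReal.ofReal_ne_top ENNReal.ofReal_ne_top
  have key : ∀ i j, ∫ p : ℝ × ℝ,
      (S i).indicator (fun _ => x i) p * (S j).indicator (fun _ => x j) p
      = x i * (min (lam i) (lam j) * min (lam i)⁻¹ (lam j)⁻¹) * x j := by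
    intro i j
    have heq : ∀ p : ℝ × ℝ, (S i).indicator (fun _ => x i) p * (S j).indicator (fun _ => x j) p
        = (S i ∩ S j).indicator (fun _ => x i * x j) p := by
      intro p
      simp only [Set.indicator_apply, Set.mem_inter_iff]
      by_cases h1 : p ∈ S i <;> by_cases h2 : p ∈ S j <;> simp [h1, h2]
    rw [MeasureTheory.integral_congr_ae (Filter.Eventually.of_forall heq),
      MeasureTheory.integral_indicator_const _ ((hmeas i).inter (hmeas j)),
      smul_eq_mul, measureReal_def, hvol]
    ring
  have hint : ∀ i j : Fin n, Integrable (fun p : ℝ × ℝ =>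
      (S i).indicator (fun _ => x i) p * (S j).indicator (fun _ => x j) p) volume := by
    intro i j
    have heq : ∀ p : ℝ × ℝ, (S i).indicator (fun _ => x i) p * (S j).indicator (fun _ => x j) p
        = (S i ∩ S j).indicator (fun _ => x i * x j) p := by
      intro p
      simp only [Set.indicator_apply, Set.mem_inter_iff]
      by_cases h1 : p ∈ S i <;> by_cases h2 : p ∈ S j <;> simp [h1, h2]
    refine (integrable_congr (Filter.Eventually.of_forall fun p => (heq p).symm)).mp ?_
    refine (integrable_indicator_iff ((hmeas i).inter (hmeas j))).mpr ?_
    refine (integrableOn_const_iff).mpr (Or.inr ?_)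
    exact lt_of_le_of_ne le_top (hfin i j)
  have main : ∑ i, ∑ j, x i * (min (lam i) (lam j) * min (lam i)⁻¹ (lam j)⁻¹) * x j
      = ∫ p : ℝ × ℝ, (∑ i, (S i).indicator (fun _ => x i) p) ^ 2 := by
    have : ∀ p : ℝ × ℝ, (∑ i, (S i).indicator (fun _ => x i) p) ^ 2
        = ∑ i, ∑ j, (S i).indicator (fun _ => x i) p * (S j).indicator (fun _ => x j) p := by
      intro p
      rw [sq, Finset.sum_mul_sum]
    rw [MeasureTheory.integral_congr_ae (Filter.Eventually.of_forall this)]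
    rw [MeasureTheory.integral_finset_sum _ (fun i _ => integrable_finset_sum _ (fun j _ => hint i j))]
    refine Finset.sum_congr rfl fun i _ => ?_
    rw [MeasureTheory.integral_finset_sum _ (fun j _ => hint i j)]
    exact Finset.sum_congr rfl fun j _ => (key i j).symm
  rw [main]
  exact integral_nonneg fun p => sq_nonneg _

theorem stmt_5 (n : ℕ) (lam : Fin n → ℝ) (hlam : ∀ i, 0 < lam i) :
    Matrix.PosSemidef
      (Matrix.of fun i j : Fin n => min (lam i) (lam j) / max (lam i) (lam j)) := by
  have hentry : ∀ i j, min (lam i) (lam j) / max (lam i) (lam j)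
      = min (lam i) (lam j) * min (lam i)⁻¹ (lam j)⁻¹ := by
    intro i j
    have h1 := hlam i; have h2 := hlam j
    rcases le_total (lam i) (lam j) with h | h
    · rw [min_eq_left h, max_eq_right h, min_eq_right (by gcongr), div_eq_mul_inv]
    · rw [min_eq_right h, max_eq_left h, min_eq_left (by gcongr), div_eq_mul_inv]
  refine Matrix.posSemidef_iff_dotProduct_mulVec.mpr ⟨?_, ?_⟩
  · ext i j
    simp [Matrix.conjTranspose_apply, min_comm, max_comm]
  · intro x
    simp only [dotProduct, Matrix.mulVec, Matrix.of_apply, Pi.star_apply,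
      RCLike.star_def, dotProduct]
    simp only [starRingEnd_apply, star_trivial]
    have := gram_aux n lam hlam x
    convert this using 1
    · rfl
    rw [Finset.sum_congr rfl]
    intro i _
    rw [Finset.mul_sum]
    refine Finset.sum_congr rfl fun j _ => ?_
    rw [hentry]
    ring
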